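/- Let (α, t) be a ranked slice with n ≥ 1 sets and let p, q ∈ Q_t. Then idx(p) < idx(q) if and only if rp(p) ≺ rp(q). -/

import Mathlib

universe u

/-- A (ranked) slice: a tuple `S 1, …, S n` of subsets of `Q` together with a
ranking function `rk`.  Only the values on `{1, …, n}` are relevant. -/
structure Slice (Q : Type u) where
  n : ℕ
  S : ℕ → Set Q
  rk : ℕ → ℕ

namespace Slice

variable {Q : Type u}

/-- A valid ranked slice: the sets are nonempty and pairwise disjoint, the ranking is a
bijection of `{1,…,n}` and the last set has rank `1`. -/
def Valid (s : Slice Q) : Prop :=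
  (∀ i ∈ Set.Icc 1 s.n, (s.S i).Nonempty) ∧
  (∀ i ∈ Set.Icc 1 s.n, ∀ j ∈ Set.Icc 1 s.n, i ≠ j → Disjoint (s.S i) (s.S j)) ∧
  Set.BijOn s.rk (Set.Icc 1 s.n) (Set.Icc 1 s.n) ∧
  (1 ≤ s.n → s.rk s.n = 1)

/-- `Q_t`: union of all sets of the slice. -/
def states (s : Slice Q) : Set Q := ⋃ i ∈ Set.Icc 1 s.n, s.S i

/-- `idx q`: the (unique) index of the set containing `q`. -/
noncomputable def idx (s : Slice Q) (q : Q) : ℕ :=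
  sInf {i | 1 ≤ i ∧ i ≤ s.n ∧ q ∈ s.S i}

end Slice

/-- The parent function `↑` of the rank tree of a ranked slice with `n` sets and
ranking `α`: the parent of `i` is the least index `k > i` (with `k ≤ n`) whose rank is
smaller. -/
noncomputable def up (n : ℕ) (α : ℕ → ℕ) (i : ℕ) : ℕ :=
  sInf {k | i < k ∧ k ≤ n ∧ α k < α i}

/-- The left subtree boundary `←(i)`: the largest index `k < i` (with `k ≥ 1`) whose
rank is smaller, and `0` if there is none. -/
noncomputable def lb (α : ℕ → ℕ) (i : ℕ) : ℕ :=
  sSup {k | 1 ≤ k ∧ k < i ∧ α k < α i}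

/-- The rank-profile of index `i`: the ranks along the path of the rank tree from the
root down to `i` (computed by following the parent function `↑` from `i` upwards as
long as the iterates are valid nodes, and reversing). -/
noncomputable def rpIdx (n : ℕ) (α : ℕ → ℕ) (i : ℕ) : List ℕ :=
  ((((List.range (n + 1)).map (fun m => (up n α)^[m] i)).takeWhile
      (fun j => decide (1 ≤ j ∧ j ≤ n))).map α).reverse

/-- The rank-profile of a state `q` of a slice. -/
noncomputable def Slice.rp {Q : Type u} (s : Slice Q) (q : Q) : List ℕ :=
  rpIdx s.n s.rk (s.idx q)

/-- The "better than" order `≺` on rank profiles: compare the common-length prefixes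
lexicographically; if they agree, the longer profile is the better (smaller) one. -/
def lexPrec (a b : List ℕ) : Prop :=
  List.Lex (· < ·) (a.take (min a.length b.length)) (b.take (min a.length b.length)) ∨
  (a.take (min a.length b.length) = b.take (min a.length b.length) ∧
    b.length < a.length)

namespace RankAux

variable {n : ℕ} {α : ℕ → ℕ}

def Ok (n : ℕ) (α : ℕ → ℕ) : Prop :=
  Set.BijOn α (Set.Icc 1 n) (Set.Icc 1 n) ∧ α n = 1

lemma Ok.maps (h : Ok n α) {i : ℕ} (h1 : 1 ≤ i) (h2 : i ≤ n) : 1 ≤ α i ∧ α i ≤ n := by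
  have := h.1.mapsTo (Set.mem_Icc.mpr ⟨h1, h2⟩)
  simpa [Set.mem_Icc] using this

lemma Ok.inj (h : Ok n α) {i j : ℕ} (hi1 : 1 ≤ i) (hi2 : i ≤ n) (hj1 : 1 ≤ j) (hj2 : j ≤ n)
    (he : α i = α j) : i = j :=
  h.1.injOn (Set.mem_Icc.mpr ⟨hi1, hi2⟩) (Set.mem_Icc.mpr ⟨hj1, hj2⟩) he

lemma Ok.one_lt (h : Ok n α) {i : ℕ} (h1 : 1 ≤ i) (h2 : i ≤ n) (hne : i ≠ n) : 1 < α i := by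
  rcases h.maps h1 h2 with ⟨ha, hb⟩
  rcases eq_or_lt_of_le ha with he | hlt
  · exact absurd (h.inj h1 h2 (by omega) le_rfl (by rw [← he, h.2])) hne
  · exact hlt

lemma up_spec (h : Ok n α) {i : ℕ} (h1 : 1 ≤ i) (h2 : i ≤ n) (hne : i ≠ n) :
    i < up n α i ∧ up n α i ≤ n ∧ α (up n α i) < α i := by
  have hmem : n ∈ {k | i < k ∧ k ≤ n ∧ α k < α i} :=
    ⟨lt_of_le_of_ne h2 hne, le_refl n, by rw [h.2]; exact h.one_lt h1 h2 hne⟩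
  exact Nat.sInf_mem ⟨n, hmem⟩

lemma up_min {i k : ℕ} (hik : i < k) (hk : k ≤ n) (hαk : α k < α i) : up n α i ≤ k :=
  Nat.sInf_le ⟨hik, hk, hαk⟩

lemma up_n : up n α n = 0 := by
  have : {k | n < k ∧ k ≤ n ∧ α k < α n} = ∅ := by
    ext k
    simp only [Set.mem_setOf_eq, Set.mem_empty_iff_false, iff_false]
    rintro ⟨a, b, -⟩; omega
  rw [up, this, Nat.sInf_empty]

lemma reach (h : Ok n α) : ∀ d i, 1 ≤ i → i ≤ n → n - i ≤ d → ∃ m, m ≤ d ∧ (up n α)^[m] i = n := by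
  intro d
  induction d with
  | zero =>
    intro i h1 h2 hd
    exact ⟨0, le_refl 0, by simp; omega⟩
  | succ d ih =>
    intro i h1 h2 hd
    by_cases hne : i = n
    · exact ⟨0, Nat.zero_le _, by simp [hne]⟩
    · obtain ⟨hlt, hle, -⟩ := up_spec h h1 h2 hne
      obtain ⟨m, hm, he⟩ := ih (up n α i) (by omega) hle (by omega)
      exact ⟨m + 1, by omega, by rw [Function.iterate_succ_apply]; exact he⟩

noncomputable def K (n : ℕ) (α : ℕ → ℕ) (i : ℕ) : ℕ := sInf {m | (up n α)^[m] i = n}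

lemma K_spec (h : Ok n α) {i : ℕ} (h1 : 1 ≤ i) (h2 : i ≤ n) :
    (up n α)^[K n α i] i = n ∧ K n α i ≤ n - i := by
  obtain ⟨m, hm, he⟩ := reach h (n - i) i h1 h2 le_rfl
  have hKmem : K n α i ∈ {m | (up n α)^[m] i = n} :=
    Nat.sInf_mem (s := {m | (up n α)^[m] i = n}) ⟨m, he⟩
  have hKle : K n α i ≤ m := Nat.sInf_le (s := {m | (up n α)^[m] i = n}) he
  exact ⟨hKmem, le_trans hKle hm⟩

lemma K_min {i m : ℕ} (hm : m < K n α i) : (up n α)^[m] i ≠ n :=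
  fun hc => Nat.notMem_of_lt_sInf (s := {m | (up n α)^[m] i = n}) hm hc

lemma chain (h : Ok n α) {i : ℕ} (h1 : 1 ≤ i) (h2 : i ≤ n) :
    ∀ m, m ≤ K n α i → 1 ≤ (up n α)^[m] i ∧ (up n α)^[m] i ≤ n ∧ i ≤ (up n α)^[m] i := by
  intro m
  induction m with
  | zero =>
    intro _
    simp only [Function.iterate_zero_apply]
    exact ⟨h1, h2, le_rfl⟩
  | succ m ih =>
    intro hm
    obtain ⟨g1, g2, g3⟩ := ih (by omega)
    have hne := K_min (show m < K n α i by omega)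
    obtain ⟨u1, u2, u3⟩ := up_spec h g1 g2 hne
    rw [Function.iterate_succ_apply']
    exact ⟨by omega, u2, by omega⟩

lemma interval (h : Ok n α) {i : ℕ} (h1 : 1 ≤ i) (h2 : i ≤ n) :
    ∀ m, m ≤ K n α i → ∀ k, i ≤ k → k ≤ (up n α)^[m] i → k ≠ (up n α)^[m] i →
      α ((up n α)^[m] i) < α k := by
  intro m
  induction m with
  | zero =>
    intro _ k hk1 hk2 hk3
    simp only [Function.iterate_zero_apply] at hk2 hk3
    omega
  | succ m ih =>
    intro hm k hk1 hk2 hkne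
    obtain ⟨g1, g2, g3⟩ := chain h h1 h2 m (by omega)
    have hne := K_min (show m < K n α i by omega)
    obtain ⟨u1, u2, u3⟩ := up_spec h g1 g2 hne
    rw [Function.iterate_succ_apply'] at hk2 hkne ⊢
    rcases lt_trichotomy k ((up n α)^[m] i) with hlt | heq | hgt
    · exact lt_trans u3 (ih (by omega) k hk1 (le_of_lt hlt) (by omega))
    · rw [heq]; exact u3
    · have hklt : k < up n α ((up n α)^[m] i) := lt_of_le_of_ne hk2 hkne
      have hnlt : ¬ α k < α ((up n α)^[m] i) := by
        intro hc
        have := up_min hgt (le_trans (le_of_lt hklt) u2) hc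
        omega
      exact lt_of_lt_of_le u3 (not_lt.mp hnlt)

lemma takeWhile_map_range {f : ℕ → ℕ} {p : ℕ → Bool} {M N : ℕ} (hMN : M ≤ N)
    (h1 : ∀ m < M, p (f m) = true) (h2 : M < N → p (f M) = false) :
    ((List.range N).map f).takeWhile p = (List.range M).map f := by
  have hall : List.takeWhile p (List.map f (List.range M)) = List.map f (List.range M) := by
    apply List.takeWhile_eq_self_iff.mpr
    intro x hx
    simp only [List.mem_map, List.mem_range] at hx
    obtain ⟨m, hm, rfl⟩ := hx
    exact h1 m hm
  rcases eq_or_lt_of_le hMN with rfl | hlt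
  · exact hall
  · obtain ⟨d, rfl⟩ : ∃ d, N = M + (d + 1) := ⟨N - M - 1, by omega⟩
    rw [List.range_add, List.map_append, List.takeWhile_append, if_pos (by rw [hall])]
    have h2' : p (f M) = false := h2 (by omega)
    rw [List.range_succ_eq_map, List.map_cons, List.map_cons]
    simp [List.takeWhile_cons, h2']

lemma rpIdx_eq (h : Ok n α) {i : ℕ} (h1 : 1 ≤ i) (h2 : i ≤ n) :
    rpIdx n α i = ((List.range (K n α i + 1)).map (fun m => α ((up n α)^[m] i))).reverse := by
  have hK := K_spec h h1 h2
  have hTW : ((List.range (n + 1)).map (fun m => (up n α)^[m] i)).takeWhile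
      (fun j => decide (1 ≤ j ∧ j ≤ n)) = (List.range (K n α i + 1)).map (fun m => (up n α)^[m] i) := by
    apply takeWhile_map_range
    · omega
    · intro m hm
      obtain ⟨g1, g2, -⟩ := chain h h1 h2 m (by omega)
      simp only [decide_eq_true_eq]
      exact ⟨g1, g2⟩
    · intro _
      have h0 : (up n α)^[K n α i + 1] i = 0 := by
        rw [Function.iterate_succ_apply', hK.1, up_n]
      simp [h0]
  rw [rpIdx, hTW, List.map_map]
  rfl

lemma rp_length (h : Ok n α) {i : ℕ} (h1 : 1 ≤ i) (h2 : i ≤ n) :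
    (rpIdx n α i).length = K n α i + 1 := by
  rw [rpIdx_eq h h1 h2]
  simp

lemma rp_getElem (h : Ok n α) {i : ℕ} (h1 : 1 ≤ i) (h2 : i ≤ n) {s : ℕ}
    (hs : s < (rpIdx n α i).length) :
    (rpIdx n α i)[s] = α ((up n α)^[K n α i - s] i) := by
  have hs' : s < K n α i + 1 := by rwa [rp_length h h1 h2] at hs
  simp only [rpIdx_eq h h1 h2]
  rw [List.getElem_reverse, List.getElem_map, List.getElem_range]
  simp only [List.length_map, List.length_range]
  have harg : K n α i + 1 - 1 - s = K n α i - s := by omega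
  rw [harg]

lemma lex_append {a b : ℕ} (hab : a < b) :
    ∀ (w t₁ t₂ : List ℕ), List.Lex (· < ·) (w ++ a :: t₁) (w ++ b :: t₂)
  | [], _, _ => List.Lex.rel hab
  | (c :: w), t₁, t₂ => List.Lex.cons (lex_append hab w t₁ t₂)

lemma lex_irrefl : ∀ l : List ℕ, ¬ List.Lex (· < ·) l l
  | [], h => by cases h
  | (a :: l), h => by
    cases h with
    | rel h => exact lt_irrefl _ h
    | cons h => exact lex_irrefl l h

lemma lex_asymm : ∀ {l₁ l₂ : List ℕ}, List.Lex (· < ·) l₁ l₂ → List.Lex (· < ·) l₂ l₁ → False := by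
  intro l₁ l₂ h
  induction h with
  | nil => intro h2; cases h2
  | @rel a l₁ b l₂ hab =>
    intro h2
    cases h2 with
    | rel h' => omega
    | cons h' => omega
  | @cons a l₁ l₂ h ih =>
    intro h2
    cases h2 with
    | rel h' => exact lt_irrefl _ h'
    | cons h' => exact ih h'

lemma main (h : Ok n α) {i j : ℕ} (hi1 : 1 ≤ i) (hi2 : i ≤ n)
    (hj1 : 1 ≤ j) (hj2 : j ≤ n) (hij : i < j) :
    lexPrec (rpIdx n α i) (rpIdx n α j) := by
  classical
  have Li := rp_length h hi1 hi2
  have Lj := rp_length h hj1 hj2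
  have hKi := K_spec h hi1 hi2
  have hKj := K_spec h hj1 hj2
  set Ki := K n α i with hKidef
  set Kj := K n α j with hKjdef
  unfold lexPrec
  by_cases hpre : ∀ s ≤ min Ki Kj, (up n α)^[Ki - s] i = (up n α)^[Kj - s] j
  · -- one profile is a prefix of the other
    have hKji : Kj < Ki := by
      by_contra hc
      push_neg at hc
      have h0 := hpre Ki (by omega)
      rw [Nat.sub_self, Function.iterate_zero_apply] at h0
      have h3 := (chain h hj1 hj2 (Kj - Ki) (by omega)).2.2
      omega
    right
    have hminL : min (rpIdx n α i).length (rpIdx n α j).length = Kj + 1 := by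
      rw [Li, Lj]; omega
    rw [hminL]
    constructor
    · apply List.ext_getElem
      · rw [List.length_take, List.length_take, Li, Lj]; omega
      · intro s hs1 hs2
        have hsb : s < Kj + 1 := by rw [List.length_take, Li] at hs1; omega
        rw [List.getElem_take, List.getElem_take, rp_getElem h hi1 hi2,
          rp_getElem h hj1 hj2, hpre s (by omega)]
    · rw [Li, Lj]; omega
  · -- profiles diverge
    push_neg at hpre
    have hex : ∃ s, s ≤ min Ki Kj ∧ (up n α)^[Ki - s] i ≠ (up n α)^[Kj - s] j := hpre
    set s₀ := Nat.find hex with hs₀def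
    have hfs := Nat.find_spec hex
    have hflt : ∀ r < s₀, (up n α)^[Ki - r] i = (up n α)^[Kj - r] j := by
      intro r hr
      have hmin := Nat.find_min hex hr
      push_neg at hmin
      exact hmin (le_trans (le_of_lt hr) hfs.1)
    have hs0pos : 1 ≤ s₀ := by
      rcases Nat.eq_zero_or_pos s₀ with h0 | h0
      · exfalso
        have hne := hfs.2
        rw [← hs₀def] at hne
        rw [h0, Nat.sub_zero, Nat.sub_zero, hKi.1, hKj.1] at hne
        exact hne rfl
      · exact h0
    have hsKi : s₀ ≤ Ki := le_trans hfs.1 (min_le_left _ _)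
    have hsKj : s₀ ≤ Kj := le_trans hfs.1 (min_le_right _ _)
    have hune := K_min (show Ki - s₀ < Ki by omega)
    have hvne := K_min (show Kj - s₀ < Kj by omega)
    obtain ⟨cu1, cu2, cu3⟩ := chain h hi1 hi2 (Ki - s₀) (by omega)
    obtain ⟨cv1, cv2, cv3⟩ := chain h hj1 hj2 (Kj - s₀) (by omega)
    obtain ⟨uu1, uu2, uu3⟩ := up_spec h cu1 cu2 hune
    obtain ⟨vv1, vv2, vv3⟩ := up_spec h cv1 cv2 hvne
    have hpu : up n α ((up n α)^[Ki - s₀] i) = (up n α)^[Ki - (s₀ - 1)] i := by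
      rw [show Ki - (s₀ - 1) = (Ki - s₀) + 1 by omega, Function.iterate_succ_apply']
    have hpv : up n α ((up n α)^[Kj - s₀] j) = (up n α)^[Kj - (s₀ - 1)] j := by
      rw [show Kj - (s₀ - 1) = (Kj - s₀) + 1 by omega, Function.iterate_succ_apply']
    have hpar : up n α ((up n α)^[Ki - s₀] i) = up n α ((up n α)^[Kj - s₀] j) := by
      rw [hpu, hpv]; exact hflt (s₀ - 1) (by omega)
    have huv : (up n α)^[Ki - s₀] i < (up n α)^[Kj - s₀] j := by
      rcases lt_trichotomy ((up n α)^[Ki - s₀] i) ((up n α)^[Kj - s₀] j) with hlt | heq | hgt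
      · exact hlt
      · exact absurd heq hfs.2
      · exfalso
        have hαuv := interval h hi1 hi2 (Ki - s₀) (by omega) ((up n α)^[Kj - s₀] j)
          (by omega) (le_of_lt hgt) (ne_of_lt hgt)
        have hub := up_min hgt cu2 hαuv
        rw [hpar] at uu1
        omega
    have hαlt : α ((up n α)^[Ki - s₀] i) < α ((up n α)^[Kj - s₀] j) := by
      have hle : ¬ α ((up n α)^[Kj - s₀] j) < α ((up n α)^[Ki - s₀] i) := by
        intro hc
        have hub := up_min huv cv2 hc
        rw [← hpar] at vv1
        omega
      have hne : α ((up n α)^[Ki - s₀] i) ≠ α ((up n α)^[Kj - s₀] j) := by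
        intro hc
        exact hfs.2 (h.inj cu1 cu2 cv1 cv2 hc)
      omega
    left
    have hminL : min (rpIdx n α i).length (rpIdx n α j).length = min Ki Kj + 1 := by
      rw [Li, Lj]; omega
    rw [hminL]
    have hsA : s₀ < (List.take (min Ki Kj + 1) (rpIdx n α i)).length := by
      rw [List.length_take, Li]; omega
    have hsB : s₀ < (List.take (min Ki Kj + 1) (rpIdx n α j)).length := by
      rw [List.length_take, Lj]; omega
    have hAe : (List.take (min Ki Kj + 1) (rpIdx n α i))[s₀]'hsA
        = α ((up n α)^[Ki - s₀] i) := by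
      rw [List.getElem_take]
      exact rp_getElem h hi1 hi2 (by rw [Li]; omega)
    have hBe : (List.take (min Ki Kj + 1) (rpIdx n α j))[s₀]'hsB
        = α ((up n α)^[Kj - s₀] j) := by
      rw [List.getElem_take]
      exact rp_getElem h hj1 hj2 (by rw [Lj]; omega)
    have hpref : List.take s₀ (List.take (min Ki Kj + 1) (rpIdx n α i))
        = List.take s₀ (List.take (min Ki Kj + 1) (rpIdx n α j)) := by
      apply List.ext_getElem
      · rw [List.length_take, List.length_take, List.length_take, List.length_take, Li, Lj]
        omega
      · intro s hs1 hs2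
        have hss : s < s₀ := by
          rw [List.length_take, List.length_take, Li] at hs1; omega
        rw [List.getElem_take, List.getElem_take, List.getElem_take, List.getElem_take,
          rp_getElem h hi1 hi2, rp_getElem h hj1 hj2, hflt s hss]
    conv_lhs => rw [← List.take_append_drop s₀ (List.take (min Ki Kj + 1) (rpIdx n α i)),
      ← List.getElem_cons_drop hsA]
    conv_rhs => rw [← List.take_append_drop s₀ (List.take (min Ki Kj + 1) (rpIdx n α j)),
      ← List.getElem_cons_drop hsB]
    rw [hAe, hBe, ← hpref]
    exact lex_append hαlt _ _ _

end RankAux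

/-- For a ranked slice with `n ≥ 1` sets and states `p, q ∈ Q_t`:
`idx p < idx q` iff `rp p ≺ rp q`. -/
theorem idx_lt_iff_rp_prec {Q : Type u} (s : Slice Q) (hs : s.Valid) (hn : 1 ≤ s.n)
    (p q : Q) (hp : p ∈ s.states) (hq : q ∈ s.states) :
    s.idx p < s.idx q ↔ lexPrec (s.rp p) (s.rp q) := by
  obtain ⟨hne, hdisj, hbij, hlast⟩ := hs
  have hok : RankAux.Ok s.n s.rk := ⟨hbij, hlast hn⟩
  have hip : 1 ≤ s.idx p ∧ s.idx p ≤ s.n := by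
    rw [Slice.states] at hp
    simp only [Set.mem_iUnion, Set.mem_Icc] at hp
    obtain ⟨i, ⟨hi1, hi2⟩, hpi⟩ := hp
    have hm : s.idx p ∈ {i | 1 ≤ i ∧ i ≤ s.n ∧ p ∈ s.S i} :=
      Nat.sInf_mem (s := {i | 1 ≤ i ∧ i ≤ s.n ∧ p ∈ s.S i}) ⟨i, hi1, hi2, hpi⟩
    exact ⟨hm.1, hm.2.1⟩
  have hiq : 1 ≤ s.idx q ∧ s.idx q ≤ s.n := by
    rw [Slice.states] at hq
    simp only [Set.mem_iUnion, Set.mem_Icc] at hq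
    obtain ⟨i, ⟨hi1, hi2⟩, hqi⟩ := hq
    have hm : s.idx q ∈ {i | 1 ≤ i ∧ i ≤ s.n ∧ q ∈ s.S i} :=
      Nat.sInf_mem (s := {i | 1 ≤ i ∧ i ≤ s.n ∧ q ∈ s.S i}) ⟨i, hi1, hi2, hqi⟩
    exact ⟨hm.1, hm.2.1⟩
  constructor
  · intro hlt
    exact RankAux.main hok hip.1 hip.2 hiq.1 hiq.2 hlt
  · intro hlex
    rcases lt_trichotomy (s.idx p) (s.idx q) with hlt | heq | hgt
    · exact hlt
    · exfalso
      unfold Slice.rp at hlex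
      rw [heq] at hlex
      unfold lexPrec at hlex
      rcases hlex with h1 | ⟨-, h2⟩
      · exact RankAux.lex_irrefl _ h1
      · omega
    · exfalso
      have hother := RankAux.main hok hiq.1 hiq.2 hip.1 hip.2 hgt
      unfold Slice.rp at hlex
      set a := rpIdx s.n s.rk (s.idx p) with ha
      set b := rpIdx s.n s.rk (s.idx q) with hb
      unfold lexPrec at hlex hother
      rw [Nat.min_comm b.length a.length] at hother
      rcases hlex with h1 | ⟨h2, h3⟩ <;> rcases hother with g1 | ⟨g2, g3⟩
      · exact RankAux.lex_asymm h1 g1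
      · rw [← g2] at h1
        exact RankAux.lex_irrefl _ h1
      · rw [h2] at g1
        exact RankAux.lex_irrefl _ g1
      · omega
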